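/- Let n be a positive integer, let G be a finite group of order 8n, and let a, b ∈ G with orderOf(a) = 4n, b² = 1, bab = a^{2n−1}, and G generated by {a, b} (so G ≅ SD_{8n}, the semidihedral group of order 8n). Let F be an arbitrary field. Then the F-vector space of inner derivations of the group algebra FG has dimension 3(2n−1) over F if n is even, and 6(n−1) over F if n is odd. -/

import Mathlib

open MonoidAlgebra

/-- The `F`-linear map sending `β ∈ FG` to the inner derivation
`d_β : α ↦ α * β - β * α` of the group algebra `FG`. -/
noncomputable def innerDerivMap (F G : Type*) [Field F] [Group G] :
    MonoidAlgebra F G →ₗ[F] Module.End F (MonoidAlgebra F G) where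
  toFun β :=
    { toFun := fun α => α * β - β * α
      map_add' := by intro x y; noncomm_ring
      map_smul' := by intro c x; simp [smul_mul_assoc, mul_smul_comm, smul_sub] }
  map_add' := by
    intro β γ; refine LinearMap.ext fun α => ?_
    simp only [LinearMap.coe_mk, AddHom.coe_mk, LinearMap.add_apply]
    noncomm_ring
  map_smul' := by
    intro c β; refine LinearMap.ext fun α => ?_
    simp [smul_mul_assoc, mul_smul_comm, smul_sub]

section AuxSD
open Finset
variable {F G : Type*} [Field F] [Group G]

lemma mem_ker_innerDerivMap_iff (β : MonoidAlgebra F G) :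
    β ∈ LinearMap.ker (innerDerivMap F G) ↔ ∀ g x : G, β.coeff (g * x * g⁻¹) = β.coeff x := by
  constructor
  · intro h g x
    have h0 : (innerDerivMap F G) β = 0 := h
    have h1 := LinearMap.ext_iff.mp h0 (MonoidAlgebra.single g⁻¹ (1:F))
    have h2 : (MonoidAlgebra.single g⁻¹ (1:F)) * β = β * (MonoidAlgebra.single g⁻¹ (1:F)) := by
      have : (MonoidAlgebra.single g⁻¹ (1:F)) * β - β * (MonoidAlgebra.single g⁻¹ (1:F)) = 0 := h1
      rwa [sub_eq_zero] at this
    have h3 := Finsupp.ext_iff.mp (congrArg MonoidAlgebra.coeff h2) (x * g⁻¹)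
    rw [MonoidAlgebra.single_mul_apply, MonoidAlgebra.mul_single_apply] at h3
    simpa [mul_assoc] using h3
  · intro h
    have key : ∀ α : MonoidAlgebra F G, α * β = β * α := by
      intro α
      induction α using MonoidAlgebra.induction_on with
      | of g =>
        ext y
        rw [MonoidAlgebra.of_apply, MonoidAlgebra.single_mul_apply, MonoidAlgebra.mul_single_apply]
        simpa [mul_assoc, mul_comm] using (h g (g⁻¹ * y)).symm
      | add f g hf hg => rw [add_mul, mul_add, hf, hg]
      | smul r f hf => rw [smul_mul_assoc, mul_smul_comm, hf]
    rw [LinearMap.mem_ker]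
    refine LinearMap.ext fun α => ?_
    show α * β - β * α = 0
    rw [key α, sub_self]

lemma finrank_ker_innerDerivMap [Fintype G] :
    Module.finrank F (LinearMap.ker (innerDerivMap F G)) = Nat.card (ConjClasses G) := by
  classical
  have hfin : Finite (ConjClasses G) := Quotient.finite _
  letI : Fintype (ConjClasses G) := Fintype.ofFinite _
  let E : (ConjClasses G → F) →ₗ[F] MonoidAlgebra F G :=
    (MonoidAlgebra.coeffLinearEquiv F).symm.toLinearMap ∘ₗ (Finsupp.linearEquivFunOnFinite F F G).symm.toLinearMap ∘ₗ
      LinearMap.funLeft F F ConjClasses.mk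
  have hEapp : ∀ (φ : ConjClasses G → F) (x : G), (E φ).coeff x = φ (ConjClasses.mk x) :=
    fun φ x => rfl
  have hker : LinearMap.ker (innerDerivMap F G) = LinearMap.range E := by
    ext β
    rw [mem_ker_innerDerivMap_iff]
    constructor
    · intro h
      refine ⟨fun c => β.coeff c.out, ?_⟩
      ext x
      rw [hEapp]
      have hq : ConjClasses.mk x = ConjClasses.mk ((ConjClasses.mk x).out) :=
        (Quotient.out_eq (ConjClasses.mk x)).symm
      have hx : IsConj x ((ConjClasses.mk x).out) :=
        ConjClasses.mk_eq_mk_iff_isConj.mp hq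
      obtain ⟨g, hg⟩ := isConj_iff.mp hx
      rw [← hg, h]
    · rintro ⟨φ, rfl⟩ g x
      rw [hEapp, hEapp]
      congr 1
      exact ConjClasses.mk_eq_mk_iff_isConj.mpr (isConj_iff.mpr ⟨g, rfl⟩).symm
  have hinj : Function.Injective E := by
    simp only [E, LinearMap.coe_comp, LinearEquiv.coe_coe]
    exact (MonoidAlgebra.coeffLinearEquiv F).symm.injective.comp <| (Finsupp.linearEquivFunOnFinite F F G).symm.injective.comp
      (LinearMap.funLeft_injective_of_surjective F F ConjClasses.mk ConjClasses.mk_surjective)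
  rw [hker, LinearMap.finrank_range_of_inj hinj, Module.finrank_fintype_fun_eq_card,
    Nat.card_eq_fintype_card]

lemma finrank_range_innerDerivMap [Fintype G] :
    Module.finrank F (LinearMap.range (innerDerivMap F G)) =
      Fintype.card G - Nat.card (ConjClasses G) := by
  haveI : FiniteDimensional F (MonoidAlgebra F G) :=
    Module.Finite.of_basis (MonoidAlgebra.basis G F)
  have h := LinearMap.finrank_range_add_finrank_ker (innerDerivMap F G)
  rw [finrank_ker_innerDerivMap (F := F) (G := G)] at h
  have hdim : Module.finrank F (MonoidAlgebra F G) = Fintype.card G := by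
    rw [Module.finrank_eq_card_basis (MonoidAlgebra.basis G F)]
  omega

end AuxSD

section AuxSD2
open Finset


lemma zmod_s_count (n : ℕ) (hn : 0 < n) [NeZero (4 * n)] :
    (univ.filter fun x : ZMod (4 * n) => ((2 * n - 2 : ℕ) : ZMod (4 * n)) * x = 0).card =
      if Even n then 2 else 4 := by
  have hkey : ∀ x : ZMod (4 * n),
      (((2 * n - 2 : ℕ) : ZMod (4 * n)) * x = 0 ↔ (4 * n) ∣ (2 * n - 2) * x.val) := by
    intro x
    conv_lhs => rw [show x = ((x.val : ℕ) : ZMod (4 * n)) by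
      simp [ZMod.natCast_val, ZMod.cast_id]]
    rw [← Nat.cast_mul, ZMod.natCast_eq_zero_iff]
  have hdvd_red : ∀ k : ℕ, 4 * n ∣ (2 * n - 2) * k ↔ 2 * n ∣ (n - 1) * k := by
    intro k
    have e : 2 * ((n - 1) * k) = (2 * n - 2) * k := by
      rw [← mul_assoc, show 2 * (n - 1) = 2 * n - 2 by omega]
    have e2 : 2 * (2 * n) = 4 * n := by ring
    constructor
    · intro h
      have h1 : 2 * (2 * n) ∣ 2 * ((n - 1) * k) := by rw [e, e2]; exact h
      exact (Nat.mul_dvd_mul_iff_left (by omega : 0 < 2)).mp h1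
    · intro h
      have h1 : 2 * (2 * n) ∣ 2 * ((n - 1) * k) := Nat.mul_dvd_mul_left 2 h
      rwa [e, e2] at h1
  have hx_eq : ∀ x : ZMod (4 * n), x = ((x.val : ℕ) : ZMod (4 * n)) := by
    intro x; simp [ZMod.natCast_val, ZMod.cast_id]
  have hvals : ∀ k l : ℕ, k < 4 * n → l < 4 * n → k ≠ l →
      ((k : ℕ) : ZMod (4 * n)) ≠ ((l : ℕ) : ZMod (4 * n)) := by
    intro k l hk hl hne h
    have := congrArg ZMod.val h
    rw [ZMod.val_natCast_of_lt hk, ZMod.val_natCast_of_lt hl] at this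
    omega
  by_cases hev : Even n
  · rw [if_pos hev]
    obtain ⟨m, hm⟩ := hev
    have hcop : Nat.Coprime (n - 1) (2 * n) := by
      have h2 : Nat.Coprime (n - 1) 2 := Nat.coprime_two_right.mpr ⟨m - 1, by omega⟩
      have hn1 : Nat.Coprime (n - 1) n := by
        have h := (Nat.coprime_add_mul_left_right (n - 1) 1 1).mpr (Nat.coprime_one_right _)
        rwa [show 1 + (n - 1) * 1 = n by omega] at h
      exact Nat.Coprime.mul_right h2 hn1
    have hchar : ∀ x : ZMod (4 * n),
        (((2 * n - 2 : ℕ) : ZMod (4 * n)) * x = 0 ↔ x = 0 ∨ x = ((2 * n : ℕ) : ZMod (4 * n))) := by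
      intro x
      rw [hkey, hdvd_red]
      constructor
      · intro h2
        have h3 : 2 * n ∣ x.val := hcop.symm.dvd_of_dvd_mul_left h2
        have h4 : x.val < 4 * n := ZMod.val_lt x
        obtain ⟨t, ht⟩ := h3
        have : t = 0 ∨ t = 1 := by
          rcases Nat.lt_or_ge t 2 with h | h
          · omega
          · exfalso; have : 2 * n * 2 ≤ 2 * n * t := Nat.mul_le_mul_left _ h; omega
        rcases this with rfl | rfl
        · left; rw [hx_eq x, ht]; simp
        · right; rw [hx_eq x, ht, mul_one]
      · rintro (rfl | rfl)
        · simp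
        · rw [ZMod.val_natCast_of_lt (by omega)]
          exact dvd_mul_left (2 * n) (n - 1)
    have hset : (univ.filter fun x : ZMod (4 * n) => ((2 * n - 2 : ℕ) : ZMod (4 * n)) * x = 0) =
        {0, ((2 * n : ℕ) : ZMod (4 * n))} := by
      ext x; simp [hchar x]
    rw [hset, Finset.card_insert_of_notMem (by
      simp only [Finset.mem_singleton]
      intro h0
      exact hvals 0 (2 * n) (by omega) (by omega) (by omega) (by rw [Nat.cast_zero]; exact h0)),
      Finset.card_singleton]
  · rw [if_neg hev]
    obtain ⟨r, hr⟩ := Nat.not_even_iff_odd.mp hev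
    have hcop : Nat.Coprime r n := by
      have h := (Nat.coprime_add_mul_right_right r 1 2).mpr (Nat.coprime_one_right _)
      rwa [show 1 + 2 * r = n by omega] at h
    have hchar : ∀ x : ZMod (4 * n),
        (((2 * n - 2 : ℕ) : ZMod (4 * n)) * x = 0 ↔
          x = 0 ∨ x = ((n : ℕ) : ZMod (4 * n)) ∨ x = ((2 * n : ℕ) : ZMod (4 * n)) ∨
            x = ((3 * n : ℕ) : ZMod (4 * n))) := by
      intro x
      rw [hkey, hdvd_red]
      constructor
      · intro h2
        have h2' : 2 * (r * x.val) = (n - 1) * x.val := by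
          rw [← mul_assoc, show 2 * r = n - 1 by omega]
        have h3 : n ∣ r * x.val := by
          have : 2 * n ∣ 2 * (r * x.val) := by rw [h2']; exact h2
          exact (Nat.mul_dvd_mul_iff_left (by omega : 0 < 2)).mp this
        have h4 : n ∣ x.val := hcop.symm.dvd_of_dvd_mul_left h3
        have h5 : x.val < 4 * n := ZMod.val_lt x
        obtain ⟨t, ht⟩ := h4
        have ht4 : t = 0 ∨ t = 1 ∨ t = 2 ∨ t = 3 := by
          rcases Nat.lt_or_ge t 4 with h | h
          · omega
          · exfalso; have : n * 4 ≤ n * t := Nat.mul_le_mul_left _ h; omega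
        rcases ht4 with rfl | rfl | rfl | rfl
        · left; rw [hx_eq x, ht]; simp
        · right; left; rw [hx_eq x, ht, mul_one]
        · right; right; left; rw [hx_eq x, ht, mul_comm n 2]
        · right; right; right; rw [hx_eq x, ht, mul_comm n 3]
      · have hdvd : ∀ k : ℕ, 2 * n ∣ (n - 1) * (k * n) := by
          intro k
          refine ⟨r * k, ?_⟩
          rw [show n - 1 = 2 * r by omega]
          ring
        rintro (rfl | rfl | rfl | rfl)
        · simp
        · rw [ZMod.val_natCast_of_lt (by omega)]
          have := hdvd 1; rwa [one_mul] at this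
        · rw [ZMod.val_natCast_of_lt (by omega)]
          exact hdvd 2
        · rw [ZMod.val_natCast_of_lt (by omega)]
          exact hdvd 3
    have hset : (univ.filter fun x : ZMod (4 * n) => ((2 * n - 2 : ℕ) : ZMod (4 * n)) * x = 0) =
        {0, ((n : ℕ) : ZMod (4 * n)), ((2 * n : ℕ) : ZMod (4 * n)),
          ((3 * n : ℕ) : ZMod (4 * n))} := by
      ext x; simp [hchar x]
    have h0cast : (0 : ZMod (4 * n)) = ((0 : ℕ) : ZMod (4 * n)) := by rw [Nat.cast_zero]
    rw [hset,
      Finset.card_insert_of_notMem (by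
        simp only [Finset.mem_insert, Finset.mem_singleton]
        push_neg
        rw [h0cast]
        exact ⟨hvals 0 n (by omega) (by omega) (by omega),
          hvals 0 (2 * n) (by omega) (by omega) (by omega),
          hvals 0 (3 * n) (by omega) (by omega) (by omega)⟩),
      Finset.card_insert_of_notMem (by
        simp only [Finset.mem_insert, Finset.mem_singleton]
        push_neg
        exact ⟨hvals n (2 * n) (by omega) (by omega) (by omega),
          hvals n (3 * n) (by omega) (by omega) (by omega)⟩),
      Finset.card_insert_of_notMem (by
        simp only [Finset.mem_singleton]
        exact hvals (2 * n) (3 * n) (by omega) (by omega) (by omega)),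
      Finset.card_singleton]

lemma card_conjClasses_semidihedral {G : Type*} [Group G] [Fintype G] (n : ℕ) (hn : 0 < n)
    (hG : Fintype.card G = 8 * n) (a b : G) (ha : orderOf a = 4 * n) (hb : b ^ 2 = 1)
    (hba : b * a * b = a ^ (2 * n - 1))
    (hgen : Subgroup.closure ({a, b} : Set G) = ⊤) :
    Nat.card (ConjClasses G) = if Even n then 2 * n + 3 else 2 * n + 6 := by
  classical
  haveI : NeZero (4 * n) := ⟨by omega⟩
  set c : ZMod (4 * n) := ((2 * n - 2 : ℕ) : ZMod (4 * n)) with hc_def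
  set s : ℕ := if Even n then 2 else 4 with hs_def
  have hs : (Finset.univ.filter fun x : ZMod (4 * n) => c * x = 0).card = s :=
    zmod_s_count n hn
  -- basic group facts
  have hb1 : b * b = 1 := by rw [← sq]; exact hb
  have hpow : ∀ p q : ℕ, (a ^ p = a ^ q ↔ (p : ZMod (4 * n)) = (q : ZMod (4 * n))) := by
    intro p q
    rw [ZMod.natCast_eq_natCast_iff, ← ha]
    exact pow_eq_pow_iff_modEq
  have hcast : ∀ x : ZMod (4 * n), ((x.val : ℕ) : ZMod (4 * n)) = x := by
    intro x; simp [ZMod.natCast_val, ZMod.cast_id]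
  have hba' : b * a = a ^ (2 * n - 1) * b := by
    have h := congrArg (· * b) hba
    simpa [mul_assoc, hb1] using h
  have hmove : ∀ k : ℕ, b * a ^ k = a ^ ((2 * n - 1) * k) * b := by
    intro k
    induction k with
    | zero => simp
    | succ k ih =>
      rw [pow_succ, ← mul_assoc, ih, mul_assoc, hba', ← mul_assoc, ← pow_add, Nat.mul_succ]
  have hbnot : b ∉ Subgroup.zpowers a := by
    intro hmem
    have hle : Subgroup.closure ({a, b} : Set G) ≤ Subgroup.zpowers a := by
      apply Subgroup.closure_le _ |>.mpr
      rintro x (rfl | rfl)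
      · exact Subgroup.mem_zpowers _
      · exact hmem
    rw [hgen] at hle
    have htop : Subgroup.zpowers a = ⊤ := le_antisymm le_top hle
    have hcard : Nat.card (Subgroup.zpowers a) = Nat.card G := by
      rw [htop]; exact Subgroup.card_top
    rw [Nat.card_zpowers, ha, Nat.card_eq_fintype_card, hG] at hcard
    omega
  -- the enumeration map
  set e : ZMod (4 * n) × ZMod 2 → G := fun p => a ^ p.1.val * b ^ p.2.val with he_def
  have hzmod2 : ∀ ε : ZMod 2, ε = 0 ∨ ε = 1 := by decide
  have hv0 : (0 : ZMod 2).val = 0 := rfl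
  have hv1 : (1 : ZMod 2).val = 1 := rfl
  -- product computations
  have hx_yb : ∀ i j : ℕ, a ^ i * (a ^ j * b) = a ^ (i + j) * b := by
    intro i j; rw [← mul_assoc, ← pow_add]
  have hyb_x : ∀ i j : ℕ, (a ^ j * b) * a ^ i = a ^ (j + (2 * n - 1) * i) * b := by
    intro i j; rw [mul_assoc, hmove, ← mul_assoc, ← pow_add]
  have hxy : ∀ i j : ℕ, (a ^ i * b) * (a ^ j * b) = a ^ (i + (2 * n - 1) * j) := by
    intro i j
    rw [mul_assoc, ← mul_assoc b, hmove j, mul_assoc (a ^ ((2 * n - 1) * j)) b b, hb1,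
      mul_one, ← pow_add]
  -- injectivity
  have hinj : Function.Injective e := by
    rintro ⟨i, ε⟩ ⟨j, δ⟩ hEq
    simp only [he_def] at hEq
    have hijval : a ^ i.val = a ^ j.val → i = j := by
      intro h
      have := (hpow i.val j.val).mp h
      rw [hcast, hcast] at this
      exact this
    have hbmem : ∀ p q : ℕ, a ^ p = a ^ q * b → False := by
      intro p q h
      apply hbnot
      have : b = (a ^ q)⁻¹ * a ^ p := by rw [h]; group
      rw [this]
      exact Subgroup.mul_mem _ (Subgroup.inv_mem _ (Subgroup.pow_mem _ (Subgroup.mem_zpowers a) q))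
        (Subgroup.pow_mem _ (Subgroup.mem_zpowers a) p)
    rcases hzmod2 ε with rfl | rfl <;> rcases hzmod2 δ with rfl | rfl
    · rw [hv0, pow_zero, mul_one, mul_one] at hEq
      exact Prod.ext (hijval hEq) rfl
    · rw [hv0, hv1, pow_zero, pow_one, mul_one] at hEq
      exact absurd hEq (fun h => hbmem _ _ h)
    · rw [hv0, hv1, pow_zero, pow_one, mul_one] at hEq
      exact absurd hEq.symm (fun h => hbmem _ _ h)
    · rw [hv1, pow_one] at hEq
      exact Prod.ext (hijval (mul_right_cancel hEq)) rfl
  have hbij : Function.Bijective e := by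
    rw [Fintype.bijective_iff_injective_and_card]
    refine ⟨hinj, ?_⟩
    rw [Fintype.card_prod, ZMod.card, ZMod.card, hG]
    ring
  set eE : (ZMod (4 * n) × ZMod 2) ≃ G := Equiv.ofBijective e hbij with heE
  have heEapp : ∀ p, eE p = a ^ p.1.val * b ^ p.2.val := fun p => rfl
  -- the commuting criterion
  have key : ∀ p q : ZMod (4 * n) × ZMod 2,
      Commute (eE p) (eE q) ↔ c * (q.2.val • p.1) = c * (p.2.val • q.1) := by
    rintro ⟨i, ε⟩ ⟨j, δ⟩
    have hcm : c = ((2 * n - 1 : ℕ) : ZMod (4 * n)) - 1 := by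
      rw [hc_def, show (2 * n - 2 : ℕ) = (2 * n - 1) - 1 by omega,
        Nat.cast_sub (by omega : 1 ≤ 2 * n - 1), Nat.cast_one]
    rcases hzmod2 ε with rfl | rfl <;> rcases hzmod2 δ with rfl | rfl <;>
      simp only [heEapp, hv0, hv1, pow_zero, pow_one, mul_one, zero_smul, one_smul, mul_zero]
    · exact iff_of_true (Commute.pow_pow_self a i.val j.val) (by simp)
    · show a ^ i.val * (a ^ j.val * b) = (a ^ j.val * b) * a ^ i.val ↔ c * i = 0
      rw [hx_yb, hyb_x, mul_left_inj, hpow]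
      push_cast
      rw [hcast, hcast, hcm]
      constructor <;> intro h <;> first
        | linear_combination h
        | linear_combination -h
    · show (a ^ i.val * b) * a ^ j.val = a ^ j.val * (a ^ i.val * b) ↔ (0 : ZMod (4 * n)) = c * j
      rw [hx_yb, hyb_x, mul_left_inj, hpow]
      push_cast
      rw [hcast, hcast, hcm]
      constructor <;> intro h <;> first
        | linear_combination h
        | linear_combination -h
    · show (a ^ i.val * b) * (a ^ j.val * b) = (a ^ j.val * b) * (a ^ i.val * b) ↔ c * i = c * j
      rw [hxy, hxy, hpow]
      push_cast
      rw [hcast, hcast, hcm]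
      constructor <;> intro h <;> first
        | linear_combination h
        | linear_combination -h
  -- counting commuting pairs
  have hcount : Nat.card {p : G × G // Commute p.1 p.2} = 16 * n ^ 2 + 12 * n * s := by
    have e1 : {p : G × G // Commute p.1 p.2} ≃
        {q : (ZMod (4 * n) × ZMod 2) × (ZMod (4 * n) × ZMod 2) //
          c * (q.2.2.val • q.1.1) = c * (q.1.2.val • q.2.1)} :=
      ((Equiv.subtypeEquiv (Equiv.prodCongr eE eE) (fun q => by
        simpa using (key q.1 q.2).symm)).symm)
    have e2 : {q : (ZMod (4 * n) × ZMod 2) × (ZMod (4 * n) × ZMod 2) //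
          c * (q.2.2.val • q.1.1) = c * (q.1.2.val • q.2.1)} ≃
        {q : (ZMod (4 * n) × ZMod (4 * n)) × (ZMod 2 × ZMod 2) //
          c * (q.2.2.val • q.1.1) = c * (q.2.1.val • q.1.2)} :=
      Equiv.subtypeEquiv (Equiv.prodProdProdComm (ZMod (4 * n)) (ZMod 2) (ZMod (4 * n)) (ZMod 2))
        (fun q => by rfl)
    rw [Nat.card_congr (e1.trans e2), Nat.card_eq_fintype_card, Fintype.card_subtype,
      Finset.card_filter, Fintype.sum_prod_type_right]
    have hfst : ∀ (P : ZMod (4 * n) → Prop) (_ : DecidablePred P),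
        (Finset.univ.filter fun ij : ZMod (4 * n) × ZMod (4 * n) => P ij.1).card =
          (Finset.univ.filter P).card * (4 * n) := by
      intro P hP
      have : (Finset.univ.filter fun ij : ZMod (4 * n) × ZMod (4 * n) => P ij.1) =
          (Finset.univ.filter P) ×ˢ Finset.univ := by
        ext ij
        simp [Finset.mem_product]
      rw [this, Finset.card_product, Finset.card_univ, ZMod.card]
    have hsnd : ∀ (P : ZMod (4 * n) → Prop) (_ : DecidablePred P),
        (Finset.univ.filter fun ij : ZMod (4 * n) × ZMod (4 * n) => P ij.2).card =
          (4 * n) * (Finset.univ.filter P).card := by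
      intro P hP
      have : (Finset.univ.filter fun ij : ZMod (4 * n) × ZMod (4 * n) => P ij.2) =
          Finset.univ ×ˢ (Finset.univ.filter P) := by
        ext ij
        simp [Finset.mem_product]
      rw [this, Finset.card_product, Finset.card_univ, ZMod.card]
    have hdiag : (Finset.univ.filter
        fun ij : ZMod (4 * n) × ZMod (4 * n) => c * ij.1 = c * ij.2).card = (4 * n) * s := by
      rw [Finset.card_filter, Fintype.sum_prod_type_right]
      have hin : ∀ j : ZMod (4 * n),
          (∑ i : ZMod (4 * n), if c * i = c * j then 1 else 0) = s := by
        intro j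
        rw [← Finset.card_filter, ← hs]
        apply Finset.card_bij' (fun i _ => i - j) (fun x _ => x + j)
        · intro i hi
          simp only [Finset.mem_filter, Finset.mem_univ, true_and] at hi ⊢
          rw [mul_sub, hi, sub_self]
        · intro x hx
          simp only [Finset.mem_filter, Finset.mem_univ, true_and] at hx ⊢
          rw [mul_add, hx, zero_add]
        · intro i _; simp
        · intro x _; simp
      rw [Finset.sum_congr rfl fun j _ => hin j, Finset.sum_const, Finset.card_univ, ZMod.card,
        smul_eq_mul]
    have hsum2 : ∀ f : ZMod 2 → ℕ, (∑ ε : ZMod 2, f ε) = f 0 + f 1 := fun f =>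
      Fin.sum_univ_two f
    have h00 : (∑ ij : ZMod (4 * n) × ZMod (4 * n),
        if c * ((0 : ZMod 2).val • ij.1) = c * ((0 : ZMod 2).val • ij.2) then 1 else 0) =
        16 * n ^ 2 := by
      simp only [hv0, zero_smul, mul_zero, eq_self_iff_true, if_true]
      rw [Finset.sum_const, Finset.card_univ, Fintype.card_prod, ZMod.card, smul_eq_mul]
      ring
    have h01 : (∑ ij : ZMod (4 * n) × ZMod (4 * n),
        if c * ((1 : ZMod 2).val • ij.1) = c * ((0 : ZMod 2).val • ij.2) then 1 else 0) =
        s * (4 * n) := by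
      simp only [hv0, hv1, one_smul, zero_smul, mul_zero]
      rw [← Finset.card_filter]
      have h := hfst (fun x => c * x = 0) inferInstance
      rw [hs] at h
      exact h
    have h10 : (∑ ij : ZMod (4 * n) × ZMod (4 * n),
        if c * ((0 : ZMod 2).val • ij.1) = c * ((1 : ZMod 2).val • ij.2) then 1 else 0) =
        (4 * n) * s := by
      simp only [hv0, hv1, one_smul, zero_smul, mul_zero]
      rw [← Finset.card_filter]
      have h := hsnd (fun x => (0 : ZMod (4 * n)) = c * x) inferInstance
      have h2 : (Finset.univ.filter fun x : ZMod (4 * n) => (0 : ZMod (4 * n)) = c * x).card = s := by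
        rw [← hs]
        congr 1
        ext x
        simp [eq_comm]
      rw [h2] at h
      exact h
    have h11 : (∑ ij : ZMod (4 * n) × ZMod (4 * n),
        if c * ((1 : ZMod 2).val • ij.1) = c * ((1 : ZMod 2).val • ij.2) then 1 else 0) =
        (4 * n) * s := by
      simp only [hv1, one_smul]
      rw [← Finset.card_filter]
      exact hdiag
    rw [Fintype.sum_prod_type, hsum2, hsum2, hsum2, h00, h01, h10, h11]
    ring
  -- conclude
  have hburn := card_comm_eq_card_conjClasses_mul_card G
  rw [hcount, Nat.card_eq_fintype_card (α := G), hG] at hburn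
  by_cases hev : Even n
  · rw [if_pos hev]
    rw [hs_def, if_pos hev] at hburn
    apply Nat.eq_of_mul_eq_mul_right (show 0 < 8 * n by omega)
    rw [← hburn]
    ring
  · rw [if_neg hev]
    rw [hs_def, if_neg hev] at hburn
    apply Nat.eq_of_mul_eq_mul_right (show 0 < 8 * n by omega)
    rw [← hburn]
    ring

end AuxSD2

/-- If `G` is the semidihedral group `SD_{8n}` and `F` is any field, then the
space of inner derivations of `FG` has dimension `3(2n-1)` for `n` even and
`6(n-1)` for `n` odd. -/
theorem finrank_innerDerivations_semidihedral (F : Type*) [Field F] (n : ℕ) (hn : 0 < n)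
    (G : Type*) [Group G] [Fintype G] (hG : Fintype.card G = 8 * n)
    (a b : G) (ha : orderOf a = 4 * n) (hb : b ^ 2 = 1)
    (hba : b * a * b = a ^ (2 * n - 1))
    (hgen : Subgroup.closure ({a, b} : Set G) = ⊤) :
    Module.finrank F (LinearMap.range (innerDerivMap F G)) =
      if Even n then 3 * (2 * n - 1) else 6 * (n - 1) := by
  classical
  rw [finrank_range_innerDerivMap (F := F) (G := G), hG,
    card_conjClasses_semidihedral n hn hG a b ha hb hba hgen]
  by_cases hev : Even n
  · rw [if_pos hev, if_pos hev]
    omega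
  · rw [if_neg hev, if_neg hev]
    omega
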